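/- In the two-phase paperclip–staple game with θ uniform on [0,1], among human threshold strategies signaling 'middle' iff θ ∈ [1/2−t, 1/2+t] (with the robot best-responding to the induced posterior mean, and the human also receiving her own greedy action reward in phase one), the expected total reward is maximized at t = 5/92; i.e., the optimal human policy selects the middle action (1,1) on the interval [41/92, 51/92], which has positive length. Hence the expert policy (t = 0) is not a best response. -/

import Mathlib

open MeasureTheory intervalIntegral

/-- Human's phase-1 reward under the threshold-`t` strategy: she plays `(0,2)`
if `θ < 1/2−t`, `(1,1)` if `|θ−1/2| ≤ t`, `(2,0)` if `θ > 1/2+t`, with reward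
`θp + (1−θ)q`. -/
noncomputable def rH (θ t : ℝ) : ℝ :=
  if θ < 1/2 - t then 2 * (1 - θ) else if θ ≤ 1/2 + t then 1 else 2 * θ

/-- Robot's phase-2 reward: it best-responds to the posterior mean induced by
the human's signal (for `t < 1/9`: `(0,90)`, `(50,50)`, `(90,0)` on the
low/middle/high signals), with reward `θp + (1−θ)q`. -/
noncomputable def rR (θ t : ℝ) : ℝ :=
  if θ < 1/2 - t then 90 * (1 - θ) else if θ ≤ 1/2 + t then 50 else 90 * θ

/-- Total expected value of the two-phase game under the threshold-`t` human
strategy with robot best response, `θ ~ Uniform[0,1]`. -/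
noncomputable def V (t : ℝ) : ℝ := ∫ θ in (0:ℝ)..1, (rH θ t + rR θ t)

lemma ae_ne (c : ℝ) : ∀ᵐ x : ℝ, x ≠ c := by
  have : (volume {c} : ENNReal) = 0 := measure_singleton c
  filter_upwards [measure_eq_zero_iff_ae_notMem.mp this] with x hx
  simpa using hx

lemma Vval (t : ℝ) (h0 : 0 ≤ t) (h1 : t ≤ 1/9) : V t = 69 + 10*t - 92*t^2 := by
  have ha : (1:ℝ)/2 - t ≥ 0 := by linarith
  have hab : (1:ℝ)/2 - t ≤ 1/2 + t := by linarith
  have hb1 : (1:ℝ)/2 + t ≤ 1 := by linarith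
  set a : ℝ := 1/2 - t with hadef
  set b : ℝ := 1/2 + t with hbdef
  set g : ℝ → ℝ := fun θ => rH θ t + rR θ t with hg
  have e1 : ∀ᵐ x : ℝ, x ∈ Set.uIoc (0:ℝ) a → g x = 92 * (1 - x) := by
    filter_upwards [ae_ne a] with x hx hmem
    rw [Set.uIoc_of_le ha] at hmem
    have hxa : x < 1/2 - t := by
      rw [← hadef]; exact lt_of_le_of_ne hmem.2 hx
    simp only [hg, rH, rR]
    rw [if_pos hxa, if_pos hxa]; ring
  have e2 : ∀ x ∈ Set.uIcc a b, g x = 51 := by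
    intro x hmem
    rw [Set.uIcc_of_le hab] at hmem
    obtain ⟨hax, hxb⟩ := hmem
    rw [hadef] at hax; rw [hbdef] at hxb
    have h1' : ¬ x < 1/2 - t := not_lt.mpr hax
    simp only [hg, rH, rR]
    rw [if_neg h1', if_neg h1', if_pos hxb, if_pos hxb]; norm_num
  have e3 : ∀ᵐ x : ℝ, x ∈ Set.uIoc b 1 → g x = 92 * x := by
    filter_upwards [] with x hmem
    rw [Set.uIoc_of_le hb1] at hmem
    have hbx : 1/2 + t < x := hbdef ▸ hmem.1
    have h1' : ¬ x < 1/2 - t := not_lt.mpr (by linarith)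
    have h2' : ¬ x ≤ 1/2 + t := not_le.mpr hbx
    simp only [hg, rH, rR]
    rw [if_neg h1', if_neg h1', if_neg h2', if_neg h2']; ring
  have i1 : IntervalIntegrable g volume 0 a := by
    apply ((continuous_const.mul (continuous_const.sub continuous_id)).intervalIntegrable
      (0:ℝ) a).congr_ae
    exact (MeasureTheory.ae_restrict_iff' measurableSet_uIoc).mpr
      (by filter_upwards [e1] with x hx hmem; exact (hx hmem).symm)
  have i2 : IntervalIntegrable g volume a b := by
    apply (_root_.intervalIntegrable_const (c := (51:ℝ)) (μ := volume) (a := a) (b := b)).congr_ae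
    exact (MeasureTheory.ae_restrict_iff' measurableSet_uIoc).mpr
      (by filter_upwards [] with x hmem; exact (e2 x (Set.uIoc_subset_uIcc hmem)).symm)
  have i3 : IntervalIntegrable g volume b 1 := by
    apply ((continuous_const.mul continuous_id).intervalIntegrable b 1).congr_ae
    exact (MeasureTheory.ae_restrict_iff' measurableSet_uIoc).mpr
      (by filter_upwards [e3] with x hx hmem; exact (hx hmem).symm)
  have split : V t = (∫ θ in (0:ℝ)..a, g θ) + (∫ θ in a..b, g θ) + (∫ θ in b..(1:ℝ), g θ) := by
    rw [V, ← intervalIntegral.integral_add_adjacent_intervals (i1.trans i2) i3,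
      ← intervalIntegral.integral_add_adjacent_intervals i1 i2]
  have v1 : (∫ θ in (0:ℝ)..a, g θ) = 92 * a - 46 * a^2 := by
    rw [intervalIntegral.integral_congr_ae e1]
    have h : (∫ θ in (0:ℝ)..a, 92 * (1 - θ)) = ∫ θ in (0:ℝ)..a, (92 - 92 * θ) := by
      apply intervalIntegral.integral_congr; intro x _; ring
    rw [h, intervalIntegral.integral_sub (g := fun θ : ℝ => 92 * θ) _root_.intervalIntegrable_const
        ((continuous_const.mul continuous_id').intervalIntegrable 0 a),
      intervalIntegral.integral_const, _root_.intervalIntegral.integral_const_mul,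
      integral_id, smul_eq_mul]
    ring
  have v2 : (∫ θ in a..b, g θ) = 51 * (b - a) := by
    rw [intervalIntegral.integral_congr e2, intervalIntegral.integral_const, smul_eq_mul]
    ring
  have v3 : (∫ θ in b..(1:ℝ), g θ) = 46 - 46 * b^2 := by
    rw [intervalIntegral.integral_congr_ae e3,
      _root_.intervalIntegral.integral_const_mul, integral_id]
    ring
  rw [split, v1, v2, v3, hadef, hbdef]; ring

/-- In the two-phase paperclip–staple game with `θ` uniform on `[0,1]`, among
human threshold strategies the expected total reward is maximized at
`t = 5/92`; the corresponding middle interval `[41/92, 51/92]` has positive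
length, and the expert policy (`t = 0`) is strictly worse, hence not a best
response. -/
theorem optimal_threshold_is_five_ninetyseconds :
    (∀ t : ℝ, 0 ≤ t → t < 1/9 → V t ≤ V (5/92)) ∧
    ((1:ℝ)/2 - 5/92 = 41/92 ∧ (1:ℝ)/2 + 5/92 = 51/92 ∧ (0:ℝ) < 51/92 - 41/92) ∧
    V 0 < V (5/92) := by
  have hopt : V (5/92) = 69 + 10*(5/92) - 92*(5/92)^2 := Vval _ (by norm_num) (by norm_num)
  refine ⟨?_, ⟨by norm_num, by norm_num, by norm_num⟩, ?_⟩
  · intro t ht0 ht1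
    rw [Vval t ht0 (le_of_lt (ht1.trans_le (by norm_num))), hopt]
    nlinarith [sq_nonneg (t - 5/92)]
  · rw [Vval 0 le_rfl (by norm_num), hopt]; norm_num
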